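/- For every t ∈ T, the map φ_t : L_E(H) → B(ℓ²(I)) is a *-homomorphism: it is linear and satisfies φ_t(u∘v) = φ_t(u)∘φ_t(v) and φ_t(u*) = (φ_t(u))* for all u,v ∈ L_E(H). -/

import Mathlib

open scoped ComplexOrder

noncomputable section

abbrev ell2 (I : Type*) : Type _ := lp (fun _ : I => ℂ) 2

/-- `n`-th singular value of an operator: distance to operators of rank `< n`. -/
def sval {F : Type*} [NormedAddCommGroup F] [InnerProductSpace ℂ F] (n : ℕ)
    (a : F →L[ℂ] F) : ℝ :=
  sInf {r : ℝ | ∃ b : F →L[ℂ] F,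
    Module.rank ℂ (LinearMap.range (b : F →ₗ[ℂ] F)) < n ∧ r = ‖a - b‖}

/-- rank one operator `z ↦ ⟨z, y⟩ • x` (inner product linear in the first variable). -/
def rankOne {F : Type*} [NormedAddCommGroup F] [InnerProductSpace ℂ F] (x y : F) :
    F →L[ℂ] F :=
  (ContinuousLinearMap.toSpanSingleton ℂ x).comp ((innerSL ℂ) y)

variable {T I : Type*} [TopologicalSpace T] [CompactSpace T] [T2Space T]

/-- membership in the Hilbert right `C(T,ℂ)`-module `H = ⊕_i p_i E`. -/
def MemH (p : I → C(T, ℂ)) (ξ : I → C(T, ℂ)) : Prop :=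
  (∀ i, p i * ξ i = ξ i) ∧ Summable fun i => star (ξ i) * ξ i

/-- the `E`-valued inner product of `H`, `⟨ξ, η⟩ = ∑ i, η i * * ξ i`. -/
def hinner (ξ η : I → C(T, ℂ)) : C(T, ℂ) := ∑' i, star (η i) * ξ i

/-- the norm of `H`. -/
def hnorm (ξ : I → C(T, ℂ)) : ℝ := Real.sqrt ‖hinner ξ ξ‖

/-- adjointable operators on `H`, i.e. the elements of `L_E(H)`. -/
structure Adjointable (p : I → C(T, ℂ)) where
  toFun : (I → C(T, ℂ)) → (I → C(T, ℂ))
  adj : (I → C(T, ℂ)) → (I → C(T, ℂ))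
  mem' : ∀ ξ, MemH p ξ → MemH p (toFun ξ)
  adj_mem' : ∀ ξ, MemH p ξ → MemH p (adj ξ)
  map_add' : ∀ ξ η, MemH p ξ → MemH p η → toFun (ξ + η) = toFun ξ + toFun η
  map_smul' : ∀ (x : C(T, ℂ)) ξ, MemH p ξ →
    toFun (fun i => ξ i * x) = fun i => toFun ξ i * x
  bound' : ∃ C : ℝ, ∀ ξ, MemH p ξ → hnorm (toFun ξ) ≤ C * hnorm ξ
  inner_adj' : ∀ ξ η, MemH p ξ → MemH p η → hinner (toFun ξ) η = hinner ξ (adj η)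

/-- `a : ℓ²(I) → ℓ²(I)` represents `φ_t u := ψ_t ∘ u ∘ ψ`. -/
def Represents (p : I → C(T, ℂ)) (t : T)
    (u : (I → C(T, ℂ)) → (I → C(T, ℂ))) (a : ell2 I →L[ℂ] ell2 I) : Prop :=
  ∀ ζ : ell2 I, ∀ i : I, (a ζ : ∀ _ : I, ℂ) i = u (fun j => ((ζ : ∀ _ : I, ℂ) j) • p j) i t

/-- membership in `K(H)`: uniform approximation, on the unit ball of `H`, by finite sums of
rank one module operators. -/
def CompactH (p : I → C(T, ℂ)) (u : (I → C(T, ℂ)) → (I → C(T, ℂ))) : Prop :=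
  ∀ ε : ℝ, 0 < ε → ∃ (m : ℕ) (ξs ηs : Fin m → (I → C(T, ℂ))),
    (∀ k, MemH p (ξs k) ∧ MemH p (ηs k)) ∧
    ∀ ζ, MemH p ζ → hnorm ζ ≤ 1 →
      hnorm (fun i => u ζ i - ∑ k, ξs k i * hinner ζ (ηs k)) ≤ ε

/-- `u ∈ L^p(E,H)`, expressed through a family `A` of representatives of the `φ_t u`:
the family `(θ_n(u)^p)ₙ` is summable in `E`. -/
def InLp {I : Type*} (pp : ℝ) (A : T → (ell2 I →L[ℂ] ell2 I)) : Prop :=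
  ∃ Θ : ℕ → C(T, ℝ), (∀ n t, Θ n t = sval (n + 1) (A t) ^ pp) ∧ Summable Θ

/-- the norm `‖u‖_p = ‖∑ₙ θ_n(u)^p‖^(1/p)`. -/
def pnorm {I : Type*} (pp : ℝ) (A : T → (ell2 I →L[ℂ] ell2 I)) : ℝ :=
  (⨆ t : T, ∑' n : ℕ, sval (n + 1) (A t) ^ pp) ^ (1 / pp)

/-- the operator norm of an element of `L_E(H)`. -/
def opNormH (p : I → C(T, ℂ)) (u : Adjointable p) : ℝ :=
  ⨆ ξ : {ξ : I → C(T, ℂ) // MemH p ξ ∧ hnorm ξ ≤ 1}, hnorm (u.toFun ξ)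

end

section AuxLemmas2

variable {T I : Type*} [TopologicalSpace T] [CompactSpace T] [T2Space T]

lemma conj_mul_self' (z : ℂ) : (starRingEnd ℂ) z * z = ((‖z‖ ^ 2 : ℝ) : ℂ) := by
  rw [mul_comm, Complex.mul_conj]
  norm_cast
  rw [Complex.normSq_eq_norm_sq]

lemma eval_tsum' {f : I → C(T, ℂ)} (hf : Summable f) (t : T) :
    (∑' i, f i) t = ∑' i, f i t := by
  simpa using (ContinuousMap.evalCLM ℂ t).map_tsum hf

lemma summable_eval' {f : I → C(T, ℂ)} (hf : Summable f) (t : T) :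
    Summable fun i => f i t :=
  hf.map (ContinuousMap.evalCLM ℂ t) (ContinuousMap.evalCLM ℂ t).continuous

lemma summable_sq_eval' {ξ : I → C(T, ℂ)} (h : Summable fun i => star (ξ i) * ξ i) (t : T) :
    Summable fun i => ‖ξ i t‖ ^ 2 := by
  have h2 := (summable_eval' h t).map Complex.reCLM Complex.reCLM.continuous
  have e : ∀ i, Complex.reCLM ((star (ξ i) * ξ i) t) = ‖ξ i t‖ ^ 2 := by
    intro i
    have : (star (ξ i) * ξ i) t = (starRingEnd ℂ) (ξ i t) * ξ i t := rfl
    rw [this, conj_mul_self']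
    exact Complex.ofReal_re _
  exact (summable_congr e).mp h2

lemma sum_norm_sq_le {ξ : I → C(T, ℂ)} (F : Finset I) (s : T) :
    ∑ i ∈ F, ‖ξ i s‖ ^ 2 ≤ ‖∑ i ∈ F, star (ξ i) * ξ i‖ := by
  have h1 : ∑ i ∈ F, ‖ξ i s‖ ^ 2 = ((∑ i ∈ F, star (ξ i) * ξ i) s).re := by
    rw [ContinuousMap.sum_apply, Complex.re_sum]
    refine Finset.sum_congr rfl fun i _ => ?_
    have : (star (ξ i) * ξ i) s = (starRingEnd ℂ) (ξ i s) * ξ i s := rfl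
    rw [this, conj_mul_self', Complex.ofReal_re]
  rw [h1]
  have h2 := ContinuousMap.norm_coe_le_norm (∑ i ∈ F, star (ξ i) * ξ i) s
  exact (Complex.re_le_norm _).trans h2

lemma summable_cross {ξ η : I → C(T, ℂ)}
    (hξ : Summable fun i => star (ξ i) * ξ i) (hη : Summable fun i => star (η i) * η i) :
    Summable fun i => star (η i) * ξ i := by
  classical
  rw [summable_iff_vanishing_norm]
  intro ε hε
  obtain ⟨s₁, hs₁⟩ := summable_iff_vanishing_norm.1 hξ ε hε
  obtain ⟨s₂, hs₂⟩ := summable_iff_vanishing_norm.1 hη ε hε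
  refine ⟨s₁ ∪ s₂, fun F hF => ?_⟩
  have h1 := hs₁ F ((Finset.disjoint_union_right.mp hF).1)
  have h2 := hs₂ F ((Finset.disjoint_union_right.mp hF).2)
  have key : ‖∑ i ∈ F, star (η i) * ξ i‖ ≤
      Real.sqrt (‖∑ i ∈ F, star (ξ i) * ξ i‖ * ‖∑ i ∈ F, star (η i) * η i‖) := by
    rw [ContinuousMap.norm_le _ (Real.sqrt_nonneg _)]
    intro s
    have e1 : ‖(∑ i ∈ F, star (η i) * ξ i) s‖ ≤ ∑ i ∈ F, ‖ξ i s‖ * ‖η i s‖ := by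
      rw [ContinuousMap.sum_apply]
      refine (norm_sum_le _ _).trans (le_of_eq (Finset.sum_congr rfl fun i _ => ?_))
      have : (star (η i) * ξ i) s = (starRingEnd ℂ) (η i s) * ξ i s := rfl
      rw [this, norm_mul, RCLike.norm_conj, mul_comm]
    have e2 : ∑ i ∈ F, ‖ξ i s‖ * ‖η i s‖ ≤
        Real.sqrt ((∑ i ∈ F, ‖ξ i s‖ ^ 2) * ∑ i ∈ F, ‖η i s‖ ^ 2) := by
      rw [Real.le_sqrt (Finset.sum_nonneg fun i _ => mul_nonneg (norm_nonneg _) (norm_nonneg _))]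
      · exact Finset.sum_mul_sq_le_sq_mul_sq F _ _
      · positivity
    refine e1.trans (e2.trans (Real.sqrt_le_sqrt ?_))
    exact mul_le_mul (sum_norm_sq_le F s) (sum_norm_sq_le F s)
      (Finset.sum_nonneg fun i _ => sq_nonneg _) (norm_nonneg _)
  calc ‖∑ i ∈ F, star (η i) * ξ i‖
      ≤ Real.sqrt (‖∑ i ∈ F, star (ξ i) * ξ i‖ * ‖∑ i ∈ F, star (η i) * η i‖) := key
    _ < Real.sqrt (ε * ε) := by
        exact Real.sqrt_lt_sqrt (mul_nonneg (norm_nonneg _) (norm_nonneg _))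
          (mul_lt_mul'' h1 h2 (norm_nonneg _) (norm_nonneg _))
    _ = ε := Real.sqrt_mul_self hε.le

lemma hinner_apply' {p : I → C(T, ℂ)} {ξ η : I → C(T, ℂ)}
    (hξ : MemH p ξ) (hη : MemH p η) (t : T) :
    hinner ξ η t = ∑' i, (starRingEnd ℂ) (η i t) * ξ i t := by
  unfold hinner
  rw [eval_tsum' (summable_cross hξ.2 hη.2) t]
  rfl

lemma p_idem' (p : I → C(T, ℂ)) (hp : ∀ i t, p i t = 0 ∨ p i t = 1) (i : I) :
    p i * p i = p i := by
  ext s; rcases hp i s with h | h <;> simp [h]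

lemma norm_p_le_one (p : I → C(T, ℂ)) (hp : ∀ i t, p i t = 0 ∨ p i t = 1) (i : I) :
    ‖p i‖ ≤ 1 := by
  rw [ContinuousMap.norm_le _ zero_le_one]
  intro s; rcases hp i s with h | h <;> simp [h]

lemma memH_smul' (p : I → C(T, ℂ)) (hp : ∀ i t, p i t = 0 ∨ p i t = 1)
    (c : I → ℂ) (hc : Summable fun i => ‖c i‖ ^ 2) :
    MemH p fun j => c j • p j := by
  constructor
  · intro i
    ext s; rcases hp i s with h | h <;> simp [h]
  · refine Summable.of_norm_bounded hc fun i => ?_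
    have hcp : ‖c i • p i‖ ≤ ‖c i‖ := by
      rw [norm_smul]; exact mul_le_of_le_one_right (norm_nonneg _) (norm_p_le_one p hp i)
    calc ‖star (c i • p i) * (c i • p i)‖ ≤ ‖star (c i • p i)‖ * ‖c i • p i‖ := norm_mul_le _ _
      _ = ‖c i • p i‖ * ‖c i • p i‖ := by rw [norm_star]
      _ ≤ ‖c i‖ * ‖c i‖ := mul_le_mul hcp hcp (norm_nonneg _) (norm_nonneg _)
      _ = ‖c i‖ ^ 2 := (sq _).symm


variable {T I : Type*} [TopologicalSpace T] [CompactSpace T] [T2Space T]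

open Classical in
/-- standard basis element of `H`. -/
noncomputable def evec (p : I → C(T, ℂ)) (i : I) : I → C(T, ℂ) := fun j => if j = i then p i else 0

lemma memH_evec (p : I → C(T, ℂ)) (hp : ∀ i t, p i t = 0 ∨ p i t = 1) (i : I) :
    MemH p (evec p i) := by
  constructor
  · intro j
    unfold evec
    by_cases h : j = i
    · subst h; simp only [if_pos rfl]; exact p_idem' p hp j
    · simp [h]
  · apply summable_of_ne_finset_zero (s := {i})
    intro j hj
    have hne : j ≠ i := by simpa using hj
    unfold evec
    rw [if_neg hne]
    simp

lemma hinner_evec (p : I → C(T, ℂ)) (hp : ∀ i t, p i t = 0 ∨ p i t = 1) {η : I → C(T, ℂ)}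
    (hη : MemH p η) (i : I) (t : T) : hinner η (evec p i) t = η i t := by
  unfold hinner
  have hz : ∀ j, j ≠ i → star (evec p i j) * η j = 0 := by
    intro j hj
    unfold evec
    rw [if_neg hj]
    simp
  rw [tsum_eq_single i hz]
  have he : evec p i i = p i := by unfold evec; rw [if_pos rfl]
  rw [he]
  have h' : (star (p i) * η i) t = (starRingEnd ℂ) (p i t) * η i t := rfl
  rw [h']
  rcases hp i t with h | h
  · have h0 : η i t = 0 := by
      have := congrArg (fun f : C(T, ℂ) => f t) (hη.1 i)
      simpa [h] using this.symm
    simp [h, h0]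
  · simp [h]

lemma key_eval (p : I → C(T, ℂ)) (hp : ∀ i t, p i t = 0 ∨ p i t = 1) (t : T)
    (u : Adjointable p) {ξ ξ' : I → C(T, ℂ)} (hξ : MemH p ξ) (hξ' : MemH p ξ')
    (h : ∀ j, ξ j t = ξ' j t) (i : I) : u.toFun ξ i t = u.toFun ξ' i t := by
  have he := memH_evec p hp i
  have h1 : u.toFun ξ i t = hinner ξ (u.adj (evec p i)) t := by
    rw [← u.inner_adj' ξ (evec p i) hξ he, hinner_evec p hp (u.mem' ξ hξ) i t]
  have h2 : u.toFun ξ' i t = hinner ξ' (u.adj (evec p i)) t := by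
    rw [← u.inner_adj' ξ' (evec p i) hξ' he, hinner_evec p hp (u.mem' ξ' hξ') i t]
  rw [h1, h2, hinner_apply' hξ (u.adj_mem' _ he) t, hinner_apply' hξ' (u.adj_mem' _ he) t]
  exact tsum_congr fun j => by rw [h j]

lemma summable_lp_sq {I : Type*} (ζ : ell2 I) :
    Summable fun i => ‖(ζ : ∀ _ : I, ℂ) i‖ ^ 2 := by
  have h := (lp.memℓp ζ).summable (p := 2) (by norm_num)
  have e : ∀ i : I,
      ‖(ζ : ∀ _ : I, ℂ) i‖ ^ ((2 : ENNReal).toReal) = ‖(ζ : ∀ _ : I, ℂ) i‖ ^ (2 : ℕ) := by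
    intro i
    rw [ENNReal.toReal_ofNat, show ((2 : ℝ)) = ((2 : ℕ) : ℝ) by norm_num, Real.rpow_natCast]
  exact (summable_congr e).mp h

lemma memH_psi (p : I → C(T, ℂ)) (hp : ∀ i t, p i t = 0 ∨ p i t = 1) (ζ : ell2 I) :
    MemH p fun j => (ζ : ∀ _ : I, ℂ) j • p j :=
  memH_smul' p hp _ (summable_lp_sq ζ)

end AuxLemmas2


/-- For every `t ∈ T`, the map `φ_t : L_E(H) → B(ℓ²(I))` is a
*-homomorphism: it is linear, multiplicative, and preserves adjoints. -/
theorem stmt2 {T I : Type*} [TopologicalSpace T] [CompactSpace T] [T2Space T]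
    (p : I → C(T, ℂ)) (hp : ∀ i t, p i t = 0 ∨ p i t = 1)
    (t : T) (u v : Adjointable p)
    (a b c d e : ell2 I →L[ℂ] ell2 I) (α β : ℂ)
    (ha : Represents p t u.toFun a)
    (hb : Represents p t v.toFun b)
    (hc : Represents p t (u.toFun ∘ v.toFun) c)
    (hd : Represents p t u.adj d)
    (he : Represents p t (fun ξ => α • u.toFun ξ + β • v.toFun ξ) e) :
    c = a ∘L b ∧ d = ContinuousLinearMap.adjoint a ∧ e = α • a + β • b := by
  classical
  set ψ : ell2 I → (I → C(T, ℂ)) := fun ζ => fun j => (ζ : ∀ _ : I, ℂ) j • p j with hψ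
  have hψmem : ∀ ζ : ell2 I, MemH p (ψ ζ) := fun ζ => memH_psi p hp ζ
  -- components of elements of H vanish where p vanishes
  have hvan : ∀ {ξ : I → C(T, ℂ)}, MemH p ξ → ∀ i, p i t = 0 → ξ i t = 0 := by
    intro ξ hξ i h0
    have := congrArg (fun f : C(T, ℂ) => f t) (hξ.1 i)
    simpa [h0] using this.symm
  refine ⟨?_, ?_, ?_⟩
  · -- c = a ∘L b
    refine ContinuousLinearMap.ext fun ζ => lp.ext (funext fun i => ?_)
    have hξ : MemH p (v.toFun (ψ ζ)) := v.mem' _ (hψmem ζ)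
    have hsum : Summable fun j => ‖v.toFun (ψ ζ) j t‖ ^ 2 := summable_sq_eval' hξ.2 t
    have hξ' : MemH p fun j => v.toFun (ψ ζ) j t • p j := memH_smul' p hp _ hsum
    have heq : ∀ j, v.toFun (ψ ζ) j t = (v.toFun (ψ ζ) j t • p j) t := by
      intro j
      rcases hp j t with h | h
      · rw [hvan hξ j h]; simp [h]
      · simp [h]
    have hk := key_eval p hp t u hξ hξ' heq i
    have hb' : (fun j => ((b ζ : ∀ _ : I, ℂ) j) • p j) = fun j => v.toFun (ψ ζ) j t • p j := by
      funext j; rw [hb ζ j]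
    calc (c ζ : ∀ _ : I, ℂ) i = u.toFun (v.toFun (ψ ζ)) i t := hc ζ i
      _ = u.toFun (fun j => v.toFun (ψ ζ) j t • p j) i t := hk
      _ = u.toFun (fun j => ((b ζ : ∀ _ : I, ℂ) j) • p j) i t := by rw [hb']
      _ = ((a ∘L b) ζ : ∀ _ : I, ℂ) i := (ha (b ζ) i).symm
  · -- d = adjoint a
    rw [ContinuousLinearMap.eq_adjoint_iff]
    intro ζ η
    have hζ := hψmem ζ
    have hη := hψmem η
    have huψη : MemH p (u.toFun (ψ η)) := u.mem' _ hη
    have hadψζ : MemH p (u.adj (ψ ζ)) := u.adj_mem' _ hζ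
    have hmain := congrArg (fun f : C(T, ℂ) => f t) (u.inner_adj' (ψ η) (ψ ζ) hη hζ)
    rw [hinner_apply' huψη hζ t, hinner_apply' hη hadψζ t] at hmain
    have hL : ∀ i, (starRingEnd ℂ) (ψ ζ i t) * u.toFun (ψ η) i t
        = (starRingEnd ℂ) ((ζ : ∀ _ : I, ℂ) i) * u.toFun (ψ η) i t := by
      intro i
      rcases hp i t with h | h
      · rw [hvan huψη i h]; ring
      · simp [hψ, h]
    have hR : ∀ i, (starRingEnd ℂ) (u.adj (ψ ζ) i t) * ψ η i t
        = (starRingEnd ℂ) ((d ζ : ∀ _ : I, ℂ) i) * (η : ∀ _ : I, ℂ) i := by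
      intro i
      rw [hd ζ i]
      rcases hp i t with h | h
      · rw [hvan hadψζ i h]; simp
      · simp [hψ, h]
    rw [lp.inner_eq_tsum, lp.inner_eq_tsum]
    simp only [RCLike.inner_apply, mul_comm _ ((starRingEnd ℂ) _)]
    calc ∑' i, (starRingEnd ℂ) ((d ζ : ∀ _ : I, ℂ) i) * (η : ∀ _ : I, ℂ) i
        = ∑' i, (starRingEnd ℂ) (u.adj (ψ ζ) i t) * ψ η i t := (tsum_congr hR).symm
      _ = ∑' i, (starRingEnd ℂ) (ψ ζ i t) * u.toFun (ψ η) i t := hmain.symm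
      _ = ∑' i, (starRingEnd ℂ) ((ζ : ∀ _ : I, ℂ) i) * u.toFun (ψ η) i t := tsum_congr hL
      _ = ∑' i, (starRingEnd ℂ) ((ζ : ∀ _ : I, ℂ) i) * (a η : ∀ _ : I, ℂ) i := by
          exact tsum_congr fun i => by rw [ha η i]
  · -- e = α • a + β • b
    refine ContinuousLinearMap.ext fun ζ => lp.ext (funext fun i => ?_)
    have h1 : (e ζ : ∀ _ : I, ℂ) i
        = (α • u.toFun (ψ ζ) + β • v.toFun (ψ ζ)) i t := he ζ i
    have h2 : (α • u.toFun (ψ ζ) + β • v.toFun (ψ ζ)) i t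
        = α * u.toFun (ψ ζ) i t + β * v.toFun (ψ ζ) i t := by
      simp [Pi.add_apply, Pi.smul_apply, ContinuousMap.add_apply, ContinuousMap.smul_apply,
        smul_eq_mul]
    have h3 : (((α • a + β • b) ζ : ell2 I) : ∀ _ : I, ℂ) i
        = α * (a ζ : ∀ _ : I, ℂ) i + β * (b ζ : ∀ _ : I, ℂ) i := by
      simp [ContinuousLinearMap.add_apply, ContinuousLinearMap.smul_apply, lp.coeFn_add,
        lp.coeFn_smul, Pi.add_apply, Pi.smul_apply, smul_eq_mul]
      rfl
    rw [h1, h2, h3, ha ζ i, hb ζ i]
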